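/- A ring R is right S-Noetherian if and only if every completely prime right ideal of R is S-finite. -/

import Mathlib

open MulOpposite

/-- `N` is an `S`-finite submodule of the right `R`-module `M`
(where right `R`-modules are modeled as `R`ᵐᵒᵖ-modules, so that
`(op s) • n = n * s` when `M = R`). -/
def SFinite {R : Type*} [Ring R] {M : Type*} [AddCommGroup M] [Module Rᵐᵒᵖ M]
    (S : Set R) (N : Submodule Rᵐᵒᵖ M) : Prop :=
  ∃ s ∈ S, ∃ F : Submodule Rᵐᵒᵖ M, F.FG ∧ F ≤ N ∧ ∀ n ∈ N, (op s) • n ∈ F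

/-- A proper right ideal `P` is completely prime if `aP ⊆ P` and `ab ∈ P` imply
`a ∈ P` or `b ∈ P`. -/
def IsCompletelyPrime {R : Type*} [Ring R] (P : Submodule Rᵐᵒᵖ R) : Prop :=
  P ≠ ⊤ ∧ ∀ a b : R, (∀ p ∈ P, a * p ∈ P) → a * b ∈ P → a ∈ P ∨ b ∈ P

/-- Left multiplication by `a` as an `Rᵐᵒᵖ`-linear map. -/
def lmulAux {R : Type*} [Ring R] (a : R) : R →ₗ[Rᵐᵒᵖ] R where
  toFun x := a * x
  map_add' := mul_add a
  map_smul' m x := by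
    simp only [MulOpposite.smul_eq_mul_unop, RingHom.id_apply, mul_assoc]

theorem top_SFinite {R : Type*} [Ring R] {S : Set R} (hS1 : (1 : R) ∈ S) :
    SFinite S (⊤ : Submodule Rᵐᵒᵖ R) := by
  refine ⟨1, hS1, ⊤, ?_, le_rfl, fun n _ => trivial⟩
  refine ⟨{1}, ?_⟩
  rw [eq_top_iff]
  intro x _
  rw [Finset.coe_singleton, Submodule.mem_span_singleton]
  exact ⟨op x, by simp [op_smul_eq_mul]⟩

theorem S_noetherian_iff_completely_prime_SFinite {R : Type*} [Ring R] (S : Set R)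
    (hS1 : (1 : R) ∈ S) (hSmul : ∀ a ∈ S, ∀ b ∈ S, a * b ∈ S) :
    (∀ I : Submodule Rᵐᵒᵖ R, SFinite S I) ↔
      (∀ P : Submodule Rᵐᵒᵖ R, IsCompletelyPrime P → SFinite S P) := by
  constructor
  · intro h P _
    exact h P
  · intro h
    by_contra hcon
    push_neg at hcon
    obtain ⟨I₀, hI₀⟩ := hcon
    set T : Set (Submodule Rᵐᵒᵖ R) := {I | ¬ SFinite S I} with hT
    obtain ⟨P, -, hP⟩ := zorn_le_nonempty₀ T (fun c hcT hc y hy => by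
      refine ⟨sSup c, ?_, fun z hz => le_sSup hz⟩
      intro hsfin
      obtain ⟨s, hs, F, hFfg, hFle, hFmul⟩ := hsfin
      have hdir : DirectedOn (· ≤ ·) c := hc.directedOn
      have hcomp := (Submodule.fg_iff_compact F).mp hFfg
      obtain ⟨I, hIc, hFI⟩ :=
        (CompleteLattice.isCompactElement_iff_le_of_directed_sSup_le _ F).mp hcomp c
          ⟨y, hy⟩ hdir hFle
      exact hcT hIc ⟨s, hs, F, hFfg, hFI, fun n hn => hFmul n (le_sSup hIc hn)⟩) I₀ hI₀
    have hmax : ∀ Q : Submodule Rᵐᵒᵖ R, P < Q → SFinite S Q := by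
      intro Q hQ
      by_contra hQns
      exact absurd (hP.2 hQns hQ.le) hQ.not_ge
    have hprime : IsCompletelyPrime P := by
      constructor
      · intro htop
        exact hP.1 (htop ▸ top_SFinite hS1)
      · intro a b haP hab
        by_contra hor
        push_neg at hor
        obtain ⟨ha, hb⟩ := hor
        -- J = (P : a)
        set J : Submodule Rᵐᵒᵖ R := Submodule.comap (lmulAux a) P with hJ
        have hPJ : P ≤ J := fun p hp => haP p hp
        have hbJ : b ∈ J := hab
        have hPltJ : P < J := hPJ.lt_of_ne (fun h => hb (h ▸ hbJ))
        obtain ⟨s₂, hs₂, F₂, hF₂fg, hF₂le, hF₂⟩ := hmax J hPltJ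
        -- P' = P + aR
        set P' : Submodule Rᵐᵒᵖ R := P ⊔ Submodule.span Rᵐᵒᵖ {a} with hP'
        have haP' : a ∈ P' := Submodule.mem_sup_right (Submodule.subset_span rfl)
        have hPltP' : P < P' := lt_of_le_of_ne le_sup_left (fun h => ha (h ▸ haP'))
        obtain ⟨s₁, hs₁, F₁, hF₁fg, hF₁le, hF₁⟩ := hmax P' hPltP'
        obtain ⟨Tf, hTf⟩ := hF₁fg
        have hdecomp : ∀ t ∈ Tf, ∃ p w, p ∈ P ∧ t = p + a * w := by
          intro t ht
          have htP' : t ∈ P' := hF₁le (hTf ▸ Submodule.subset_span ht)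
          rw [hP', Submodule.mem_sup] at htP'
          obtain ⟨p, hp, z, hz, hpz⟩ := htP'
          rw [Submodule.mem_span_singleton] at hz
          obtain ⟨r, hr⟩ := hz
          exact ⟨p, r.unop, hp, by rw [← hpz, ← hr, MulOpposite.smul_eq_mul_unop]⟩
        choose! pf rf hpf hdec using hdecomp
        set G : Submodule Rᵐᵒᵖ R :=
          Submodule.span Rᵐᵒᵖ (pf '' ↑Tf) ⊔ Submodule.map (lmulAux a) F₂ with hG
        have hGfg : G.FG := by
          refine Submodule.FG.sup ?_ (hF₂fg.map _)
          exact Submodule.fg_span (Tf.finite_toSet.image pf)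
        have hGle : G ≤ P := by
          refine sup_le ?_ ?_
          · rw [Submodule.span_le]
            rintro x ⟨t, ht, rfl⟩
            exact hpf t ht
          · rintro x ⟨y, hy, rfl⟩
            exact hF₂le hy
        refine hP.1 ⟨s₁ * s₂, hSmul s₁ hs₁ s₂ hs₂, G, hGfg, hGle, ?_⟩
        intro x hx
        have h1 : op s₁ • x ∈ F₁ := hF₁ x (Submodule.mem_sup_left hx)
        rw [← hTf] at h1
        have h2 : ∃ y ∈ Submodule.span Rᵐᵒᵖ (pf '' (↑Tf : Set R)),
            ∃ w : R, op s₁ • x = y + a * w := by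
          refine Submodule.span_induction ?_ ?_ ?_ ?_ h1
          · intro t ht
            exact ⟨pf t, Submodule.subset_span ⟨t, ht, rfl⟩, rf t, hdec t ht⟩
          · exact ⟨0, Submodule.zero_mem _, 0, by simp⟩
          · rintro u v hu hv ⟨y, hy, w, rfl⟩ ⟨y', hy', w', rfl⟩
            exact ⟨y + y', Submodule.add_mem _ hy hy', w + w', by rw [mul_add]; abel⟩
          · rintro c u hu ⟨y, hy, w, rfl⟩
            refine ⟨c • y, Submodule.smul_mem _ _ hy, w * c.unop, ?_⟩
            rw [smul_add, MulOpposite.smul_eq_mul_unop (b := a * w), mul_assoc]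
        obtain ⟨y, hy, w, hw⟩ := h2
        have hyP : y ∈ P := by
          have : Submodule.span Rᵐᵒᵖ (pf '' (↑Tf : Set R)) ≤ P := by
            rw [Submodule.span_le]
            rintro x' ⟨t, ht, rfl⟩
            exact hpf t ht
          exact this hy
        have haw : a * w ∈ P := by
          have hxs : op s₁ • x ∈ P := Submodule.smul_mem _ _ hx
          have := Submodule.sub_mem _ hxs hyP
          rwa [hw, add_sub_cancel_left] at this
        have hwJ : w ∈ J := haw
        have hws : op s₂ • w ∈ F₂ := hF₂ w hwJ
        have key : op (s₁ * s₂) • x = op s₂ • y + a * (op s₂ • w) := by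
          rw [op_mul, mul_smul, hw, smul_add]
          congr 1
          rw [MulOpposite.smul_eq_mul_unop (b := a * w),
            MulOpposite.smul_eq_mul_unop (b := w), mul_assoc]
        rw [key]
        refine Submodule.add_mem _ ?_ ?_
        · exact Submodule.mem_sup_left (Submodule.smul_mem _ _ hy)
        · exact Submodule.mem_sup_right ⟨op s₂ • w, hws, rfl⟩
    exact hP.1 (h P hprime)
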